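/- Let F be a field with char F ≠ 2 and char F ≠ 3, and let A = A₁₃ = [[0, 0, 0, 0],[1, 0, 0, 0]]. Then the invertible 2×2 matrices g over F with gA = A(g⊗g) are exactly the matrices [[a,0],[c,a²]] with a,c ∈ F, a ≠ 0, and the 2×2 matrices D with DA = A(D⊗I₂ + I₂⊗D) are exactly the matrices [[a,0],[c,2a]] with a,c ∈ F. -/
import Mathlib


open Matrix Kronecker

/-- The matrix of structure constants (MSC) of a 2-dimensional algebra, as a
`2 × (2 × 2)` matrix: the column indexed by `(j,k)` corresponds to the product
`e_j · e_k`, so the columns in order `(0,0), (0,1), (1,0), (1,1)` carry the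
entries `α₁ α₂ α₃ α₄` (first row) and `β₁ β₂ β₃ β₄` (second row). -/
def MSC {F : Type*} [Field F] (a1 a2 a3 a4 b1 b2 b3 b4 : F) :
    Matrix (Fin 2) (Fin 2 × Fin 2) F :=
  Matrix.of fun i j => !![a1, a2, a3, a4; b1, b2, b3, b4] i (finProdFinEquiv j)

/-- `g` is an automorphism matrix of the algebra with MSC `A`:
`g` is invertible and `g • A = A • (g ⊗ g)`. -/
def IsAutoMat {F : Type*} [Field F] (A : Matrix (Fin 2) (Fin 2 × Fin 2) F)
    (g : Matrix (Fin 2) (Fin 2) F) : Prop :=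
  IsUnit g ∧ g * A = A * (g ⊗ₖ g)

/-- `D` is a derivation matrix of the algebra with MSC `A`:
`D • A = A • (D ⊗ I + I ⊗ D)`. -/
def IsDerMat {F : Type*} [Field F] (A : Matrix (Fin 2) (Fin 2 × Fin 2) F)
    (D : Matrix (Fin 2) (Fin 2) F) : Prop :=
  D * A = A * (D ⊗ₖ (1 : Matrix (Fin 2) (Fin 2) F) + (1 : Matrix (Fin 2) (Fin 2) F) ⊗ₖ D)

theorem stmt_14 {F : Type*} [Field F] (h2 : ringChar F ≠ 2) (h3 : ringChar F ≠ 3)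
    (A : Matrix (Fin 2) (Fin 2 × Fin 2) F)
    (hA : A = MSC 0 0 0 0 1 0 0 0) :
    (∀ g : Matrix (Fin 2) (Fin 2) F,
      IsAutoMat A g ↔ ∃ a c : F, a ≠ 0 ∧ g = !![a, 0; c, a ^ 2]) ∧
    (∀ D : Matrix (Fin 2) (Fin 2) F,
      IsDerMat A D ↔ ∃ a c : F, D = !![a, 0; c, 2 * a]) := by
  subst hA
  constructor
  · intro g
    constructor
    · rintro ⟨hu, h⟩
      have h1 := Matrix.ext_iff.2 h 0 (0,0)
      have h4 := Matrix.ext_iff.2 h 1 (0,0)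
      simp [Matrix.mul_apply, MSC, Fin.sum_univ_succ, kroneckerMap_apply, finProdFinEquiv,
        Fintype.sum_prod_type] at h1 h4
      refine ⟨g 0 0, g 1 0, ?_, ?_⟩
      · intro ha
        rw [Matrix.isUnit_iff_isUnit_det] at hu
        rw [Matrix.det_fin_two, h1, ha] at hu
        simp at hu
      · ext i j
        fin_cases i <;> fin_cases j <;> simp [h1, h4, sq]
    · rintro ⟨a, c, ha, rfl⟩
      constructor
      · rw [Matrix.isUnit_iff_isUnit_det, Matrix.det_fin_two_of]
        simpa using pow_ne_zero 3 ha
      · ext i ⟨j, k⟩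
        fin_cases i <;> fin_cases j <;> fin_cases k <;>
          simp [Matrix.mul_apply, MSC, Fin.sum_univ_succ, kroneckerMap_apply, finProdFinEquiv,
            Fintype.sum_prod_type] <;> ring
  · intro D
    rw [IsDerMat]
    constructor
    · intro h
      have h1 := Matrix.ext_iff.2 h 0 (0,0)
      have h4 := Matrix.ext_iff.2 h 1 (0,0)
      simp [Matrix.mul_apply, MSC, Fin.sum_univ_succ, kroneckerMap_apply, finProdFinEquiv,
        Matrix.one_apply, Fintype.sum_prod_type] at h1 h4
      refine ⟨D 0 0, D 1 0, ?_⟩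
      ext i j
      fin_cases i <;> fin_cases j <;> simp [h1, h4] <;> ring
    · rintro ⟨a, c, rfl⟩
      ext i ⟨j, k⟩
      fin_cases i <;> fin_cases j <;> fin_cases k <;>
        simp [Matrix.mul_apply, MSC, Fin.sum_univ_succ, kroneckerMap_apply, finProdFinEquiv,
          Matrix.one_apply, Fintype.sum_prod_type] <;> ring
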